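/- Let u ≠ v be points in the plane and let C_u = {w : angle(w − u, v − u) ≤ π/3} and C_v = {w : angle(w − v, u − v) ≤ π/3} be the closed 2π/3-cones at u directed toward v and at v directed toward u, respectively. Then v ∈ C_u, u ∈ C_v, and moreover the entire side region of {u,v} adjacent to v, namely {w ≠ v : angle(w − v, v − u) ≤ π/3}, is contained in C_u. -/

import Mathlib

open Real

lemma angle_add_le {V : Type*} [NormedAddCommGroup V] [InnerProductSpace ℝ V]
    (a b : V) (ha : a ≠ 0) (hb : b ≠ 0) (hab : b + a ≠ 0)
    (hθ : InnerProductGeometry.angle b a ≤ π / 2) :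
    InnerProductGeometry.angle (b + a) a ≤ InnerProductGeometry.angle b a := by
  set θ := InnerProductGeometry.angle b a with hθdef
  have hna : (0:ℝ) < ‖a‖ := norm_pos_iff.mpr ha
  have hnb : (0:ℝ) < ‖b‖ := norm_pos_iff.mpr hb
  have hnab : (0:ℝ) < ‖b + a‖ := norm_pos_iff.mpr hab
  set c := Real.cos θ with hc
  have hc0 : 0 ≤ c := Real.cos_nonneg_of_mem_Icc
    ⟨by linarith [InnerProductGeometry.angle_nonneg b a, Real.pi_pos], hθ⟩
  have hc1 : c ≤ 1 := Real.cos_le_one θ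
  have hinner : inner ℝ b a = c * (‖b‖ * ‖a‖) := by
    rw [hc, hθdef, InnerProductGeometry.cos_angle]
    field_simp
  have htri : ‖b + a‖ ≤ ‖b‖ + ‖a‖ := norm_add_le b a
  have hcos2 : Real.cos (InnerProductGeometry.angle (b + a) a)
      = (c * (‖b‖ * ‖a‖) + ‖a‖ ^ 2) / (‖b + a‖ * ‖a‖) := by
    rw [InnerProductGeometry.cos_angle, inner_add_left, hinner,
      real_inner_self_eq_norm_sq]
  have hge : c ≤ Real.cos (InnerProductGeometry.angle (b + a) a) := by
    rw [hcos2, le_div_iff₀ (by positivity)]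
    nlinarith [mul_nonneg (mul_nonneg hc0 (sub_nonneg.mpr htri)) hna.le,
      mul_nonneg (sub_nonneg.mpr hc1) (sq_nonneg ‖a‖)]
  by_contra h
  push_neg at h
  have hlt := Real.strictAntiOn_cos
    ⟨InnerProductGeometry.angle_nonneg b a, InnerProductGeometry.angle_le_pi b a⟩
    ⟨InnerProductGeometry.angle_nonneg _ _, InnerProductGeometry.angle_le_pi _ _⟩ h
  linarith

theorem center_orientation_properties (u v : EuclideanSpace ℝ (Fin 2)) (huv : u ≠ v) :
    InnerProductGeometry.angle (v - u) (v - u) ≤ π / 3 ∧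
    InnerProductGeometry.angle (u - v) (u - v) ≤ π / 3 ∧
    ∀ w : EuclideanSpace ℝ (Fin 2), w ≠ v →
      InnerProductGeometry.angle (w - v) (v - u) ≤ π / 3 →
      InnerProductGeometry.angle (w - u) (v - u) ≤ π / 3 := by
  have hvu : v - u ≠ 0 := sub_ne_zero.mpr (Ne.symm huv)
  have huv' : u - v ≠ 0 := sub_ne_zero.mpr huv
  have hpi : (0:ℝ) < π / 3 := by positivity
  refine ⟨by rw [InnerProductGeometry.angle_self hvu]; linarith,
    by rw [InnerProductGeometry.angle_self huv']; linarith, ?_⟩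
  intro w hwv hang
  have hwv' : w - v ≠ 0 := sub_ne_zero.mpr hwv
  have hwu : w - u ≠ 0 := by
    intro h
    have hw : w = u := sub_eq_zero.mp h
    rw [hw] at hang
    have : u - v = -(v - u) := by abel
    rw [this, InnerProductGeometry.angle_comm,
      InnerProductGeometry.angle_self_neg_of_nonzero hvu] at hang
    linarith [Real.pi_pos]
  have hsum : (w - v) + (v - u) = w - u := by abel
  have := angle_add_le (v - u) (w - v) hvu hwv' (by rw [hsum]; exact hwu)
    (by linarith [Real.pi_pos])
  rw [hsum] at this
  linarith
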